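/- Assume moreover q ≠ 1. For every natural number n, the following identity holds in A: eⁿ·(e·f) = (qⁿ·(e·f) + (q^{n+1}·(1 − qⁿ)/4)·h² + (q^{n+1}·(qⁿ − 1)/(q − 1))·h − (qⁿ − 1)·(q^{n+1} − 1)/(q − 1)²)·eⁿ. -/
import Mathlib


/-- if `q ≠ 1`, then for every natural number `n`:
`eⁿ·(e·f) = (qⁿ·(e·f) + (q^{n+1}·(1 − qⁿ)/4)·h² + (q^{n+1}·(qⁿ − 1)/(q − 1))·h
             − (qⁿ − 1)·(q^{n+1} − 1)/(q − 1)²)·eⁿ` in `A`. -/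
theorem jz_powers_twisted_commutation_ef {A : Type*} [Ring A] [Algebra ℂ A]
    (q : ℂ) (hq : q ≠ 0) (hq1 : q ≠ 1) (e f h : A)
    (rel1 : q • (h * e) - e * h = 2 * e)
    (rel2 : h * f - q • (f * h) = -(2 * f))
    (rel3 : e * f - q • (f * e) = h + ((1 - q) / 4) • h ^ 2) :
    ∀ n : ℕ,
      e ^ n * (e * f)
        = ((q ^ n) • (e * f) + (q ^ (n + 1) * (1 - q ^ n) / 4) • h ^ 2
            + (q ^ (n + 1) * (q ^ n - 1) / (q - 1)) • h
            - algebraMap ℂ A ((q ^ n - 1) * (q ^ (n + 1) - 1) / (q - 1) ^ 2))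
          * e ^ n := by
  have h2e : (2 : A) * e = (2 : ℂ) • e := by rw [two_mul, ← two_smul ℂ]
  have he : e * h = q • (h * e) - (2 : ℂ) • e := by rw [← h2e, ← rel1]; abel
  have eh2 : e * h ^ 2 = (q ^ 2) • (h ^ 2 * e) - (4 * q) • (h * e) + (4 : ℂ) • e := by
    have e1 : e * h ^ 2 = (q • (h * e) - (2 : ℂ) • e) * h := by rw [sq, ← mul_assoc, he]
    rw [e1, sub_mul, smul_mul_assoc, smul_mul_assoc, mul_assoc, he]
    have h2 : h * (h * e) = h ^ 2 * e := by rw [sq, mul_assoc]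
    simp only [mul_sub, smul_sub, mul_smul_comm, smul_smul, h2]
    match_scalars <;> ring
  have efeq : e * f = q • (f * e) + (h + ((1 - q) / 4) • h ^ 2) := by
    rw [← rel3]; abel
  have eef : e * (e * f) = q • ((e * f) * e) + e * h + ((1 - q) / 4) • (e * h ^ 2) := by
    nth_rewrite 1 [efeq]
    rw [mul_add, mul_add, mul_smul_comm, mul_smul_comm, ← mul_assoc]; abel
  intro n
  induction n with
  | zero => simp
  | succ n ih =>
    have key : e * ((q ^ n) • (e * f) + (q ^ (n + 1) * (1 - q ^ n) / 4) • h ^ 2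
            + (q ^ (n + 1) * (q ^ n - 1) / (q - 1)) • h
            - algebraMap ℂ A ((q ^ n - 1) * (q ^ (n + 1) - 1) / (q - 1) ^ 2))
        = ((q ^ (n + 1)) • (e * f) + (q ^ (n + 1 + 1) * (1 - q ^ (n + 1)) / 4) • h ^ 2
            + (q ^ (n + 1 + 1) * (q ^ (n + 1) - 1) / (q - 1)) • h
            - algebraMap ℂ A ((q ^ (n + 1) - 1) * (q ^ (n + 1 + 1) - 1) / (q - 1) ^ 2)) * e := by
      simp only [Algebra.algebraMap_eq_smul_one, mul_add, mul_sub, add_mul, sub_mul,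
        mul_smul_comm, smul_mul_assoc, mul_one, one_mul]
      rw [eef, eh2, he]
      have hq1' : q - 1 ≠ 0 := sub_ne_zero.mpr hq1
      match_scalars <;> field_simp <;> ring
    calc e ^ (n + 1) * (e * f) = e * (e ^ n * (e * f)) := by
            rw [pow_succ', mul_assoc]
      _ = e * (((q ^ n) • (e * f) + (q ^ (n + 1) * (1 - q ^ n) / 4) • h ^ 2
            + (q ^ (n + 1) * (q ^ n - 1) / (q - 1)) • h
            - algebraMap ℂ A ((q ^ n - 1) * (q ^ (n + 1) - 1) / (q - 1) ^ 2)) * e ^ n) := by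
            rw [ih]
      _ = (e * ((q ^ n) • (e * f) + (q ^ (n + 1) * (1 - q ^ n) / 4) • h ^ 2
            + (q ^ (n + 1) * (q ^ n - 1) / (q - 1)) • h
            - algebraMap ℂ A ((q ^ n - 1) * (q ^ (n + 1) - 1) / (q - 1) ^ 2))) * e ^ n := by
            rw [mul_assoc]
      _ = _ := by rw [key, mul_assoc, ← pow_succ']
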